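/- Let g ≤ k and suppose the k variables partition into g groups with identical within-group missingness patterns, the n rows of group-level indicators are mutually independent, and each group-level conditional observation probability is bounded by q ∈ [0,1). Then the probability that listwise deletion removes all rows is at least (1 - q^g)^n. -/

import Mathlib

open MeasureTheory ProbabilityTheory
open scoped ENNReal

/-- group-level Lemma 8: with `g ≤ k` groups of variables sharing
missingness patterns, mutually independent rows of group-level indicators
(`M i j ω = true` means group `j` of row `i` is missing), and group-level
conditional observation probabilities bounded by `q < 1`, the probability that
listwise deletion removes all rows is at least `(1 - q^g)^n`. -/
theorem group_listwise_deletion_lower_bound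
    {Ω : Type*} [MeasurableSpace Ω] (μ : Measure Ω) [IsProbabilityMeasure μ]
    (n g k : ℕ) (hg : 1 ≤ g) (hgk : g ≤ k)
    (M : Fin n → Fin g → Ω → Bool)
    (hM : ∀ i j, Measurable (M i j))
    (hindep : iIndepFun
      (fun i ω => fun j => M i j ω) μ)
    (q : ℝ≥0∞) (hq : q < 1)
    (h1 : ∀ i, μ {ω | M i ⟨0, hg⟩ ω = false} ≤ q)
    (hcond : ∀ i, ∀ j : Fin g, 0 < j.val →
      μ (⋂ m : Fin g, ⋂ _ : m < j, {ω | M i m ω = false}) ≠ 0 →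
      (μ[|⋂ m : Fin g, ⋂ _ : m < j, {ω | M i m ω = false}])
        {ω | M i j ω = false} ≤ q) :
    (1 - q ^ g) ^ n ≤ μ {ω | ∀ i : Fin n, ∃ j : Fin g, M i j ω = true} := by
  -- per-row sets
  set C : Fin n → ℕ → Set Ω :=
    fun i t => ⋂ m : Fin g, ⋂ _ : m.val < t, {ω | M i m ω = false} with hC
  have hCmeas : ∀ i t, MeasurableSet (C i t) := by
    intro i t
    exact MeasurableSet.iInter fun m => MeasurableSet.iInter fun _ =>
      (hM i m) (measurableSet_singleton false)
  have hrow : ∀ i, ∀ t ≤ g, μ (C i t) ≤ q ^ t := by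
    intro i t
    induction t with
    | zero =>
      intro _
      simp only [hC]
      have : C i 0 = Set.univ := by
        simp [hC, Nat.not_lt_zero]
      simp [this]
    | succ t ih =>
      intro ht
      have htg : t < g := ht
      have hsplit : C i (t + 1) = C i t ∩ {ω | M i ⟨t, htg⟩ ω = false} := by
        ext ω
        simp only [hC, Set.mem_iInter, Set.mem_inter_iff, Set.mem_setOf_eq]
        constructor
        · intro h
          exact ⟨fun m hm => h m (Nat.lt_succ_of_lt hm), h ⟨t, htg⟩ (Nat.lt_succ_self t)⟩
        · rintro ⟨h1', h2⟩ m hm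
          rcases Nat.lt_succ_iff_lt_or_eq.mp hm with h | h
          · exact h1' m h
          · have : m = ⟨t, htg⟩ := Fin.ext h
            rw [this]; exact h2
      rcases Nat.eq_zero_or_pos t with rfl | htpos
      · have : C i 1 = {ω | M i ⟨0, hg⟩ ω = false} := by
          rw [hsplit]
          have : C i 0 = Set.univ := by simp [hC, Nat.not_lt_zero]
          rw [this, Set.univ_inter]
        rw [this, pow_one]
        exact h1 i
      · -- t > 0
        have hCeq : C i t = ⋂ m : Fin g, ⋂ _ : m < (⟨t, htg⟩ : Fin g),
            {ω | M i m ω = false} := by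
          simp only [hC, Fin.lt_def]
        rcases eq_or_ne (μ (C i t)) 0 with h0 | h0
        · have : μ (C i (t + 1)) = 0 := by
            refine le_antisymm ?_ zero_le
            rw [← h0, hsplit]
            exact measure_mono Set.inter_subset_left
          rw [this]; exact zero_le
        · have h0' : μ (⋂ m : Fin g, ⋂ _ : m < (⟨t, htg⟩ : Fin g),
              {ω | M i m ω = false}) ≠ 0 := by rw [← hCeq]; exact h0
          have hcq := hcond i ⟨t, htg⟩ htpos h0'
          rw [cond_apply (by rw [← hCeq]; exact hCmeas i t)] at hcq
          rw [← hCeq] at hcq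
          have hfin : μ (C i t) ≠ ∞ := (measure_lt_top μ _).ne
          have key : μ (C i (t + 1)) ≤ q * μ (C i t) := by
            rw [hsplit]
            calc μ (C i t ∩ {ω | M i ⟨t, htg⟩ ω = false})
                = μ (C i t) * ((μ (C i t))⁻¹ *
                    μ (C i t ∩ {ω | M i ⟨t, htg⟩ ω = false})) := by
                  rw [← mul_assoc, ENNReal.mul_inv_cancel h0 hfin, one_mul]
              _ ≤ μ (C i t) * q := by
                  exact mul_le_mul_right hcq _
              _ = q * μ (C i t) := mul_comm _ _
          calc μ (C i (t + 1)) ≤ q * μ (C i t) := key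
            _ ≤ q * q ^ t := mul_le_mul_right (ih (le_of_lt ht)) q
            _ = q ^ (t + 1) := (pow_succ' q t).symm
  -- events
  set A : Fin n → Set Ω := fun i => {ω | ∃ j : Fin g, M i j ω = true} with hA
  have hAcompl : ∀ i, (A i)ᶜ = C i g := by
    intro i
    ext ω
    simp only [hA, hC, Set.mem_compl_iff, Set.mem_setOf_eq, Set.mem_iInter,
      not_exists, Bool.not_eq_true]
    exact ⟨fun h m _ => h m, fun h m => h m m.isLt⟩
  have hAmeasC : ∀ i, MeasurableSet[(inferInstance : MeasurableSpace (Fin g → Bool)).comap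
      (fun ω => fun j => M i j ω)] (A i) := by
    intro i
    refine ⟨{v : Fin g → Bool | ∃ j, v j = true}, ?_, rfl⟩
    have : {v : Fin g → Bool | ∃ j, v j = true}
        = ⋃ j : Fin g, (fun v : Fin g → Bool => v j) ⁻¹' {true} := by
      ext v; simp
    rw [this]
    exact MeasurableSet.iUnion fun j => (measurable_pi_apply j) (measurableSet_singleton true)
  have hsetA : {ω | ∀ i : Fin n, ∃ j : Fin g, M i j ω = true} = ⋂ i, A i := by
    ext ω; simp [hA]
  rw [hsetA, hindep.meas_iInter hAmeasC]
  calc (1 - q ^ g) ^ n = ∏ _i : Fin n, (1 - q ^ g) := by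
        rw [Finset.prod_const, Finset.card_univ, Fintype.card_fin]
    _ ≤ ∏ i, μ (A i) := by
        refine Finset.prod_le_prod' fun i _ => ?_
        have hc : μ (A i) = 1 - μ ((A i)ᶜ) := by
          rw [eq_comm, ← prob_compl_eq_one_sub]
          · rw [compl_compl]
          · rw [hAcompl i]
            exact hCmeas i g
        rw [hc, hAcompl i]
        exact tsub_le_tsub_left (hrow i g le_rfl) 1
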